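/- Let d₋₁, d₀ be positive integers. If there exists a semistable representation (V₋₁, V₀, f₀, f₁) of the Kronecker quiver K₂ with dim V₋₁ = d₋₁ and dim V₀ = d₀, then either d₋₁ = d₀, or there exists a positive integer k with k·d₀ = (k+1)·d₋₁, or there exists a positive integer k with k·d₋₁ = (k+1)·d₀. -/

import Mathlib

/-- A subrepresentation of a representation `f : Fin n → (V₁ →ₗ[ℂ] V₀)` of the `n`-arrow
Kronecker quiver: a pair of subspaces stable under all the maps. -/
def KroneckerSubrep {n : ℕ} {V₁ V₀ : Type} [AddCommGroup V₁] [Module ℂ V₁]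
    [AddCommGroup V₀] [Module ℂ V₀] (f : Fin n → V₁ →ₗ[ℂ] V₀)
    (W₁ : Submodule ℂ V₁) (W₀ : Submodule ℂ V₀) : Prop :=
  ∀ i, ∀ x ∈ W₁, f i x ∈ W₀

/-- Semistability of a representation of the `n`-arrow Kronecker quiver: every
subrepresentation `(W₁, W₀)` satisfies `dim V₁ · dim W₀ - dim V₀ · dim W₁ ≥ 0`. -/
def KroneckerSemistable {n : ℕ} {V₁ V₀ : Type} [AddCommGroup V₁] [Module ℂ V₁]
    [AddCommGroup V₀] [Module ℂ V₀] (f : Fin n → V₁ →ₗ[ℂ] V₀) : Prop :=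
  ∀ (W₁ : Submodule ℂ V₁) (W₀ : Submodule ℂ V₀), KroneckerSubrep f W₁ W₀ →
    0 ≤ (Module.finrank ℂ V₁ : ℤ) * (Module.finrank ℂ ↥W₀ : ℤ) -
        (Module.finrank ℂ V₀ : ℤ) * (Module.finrank ℂ ↥W₁ : ℤ)

open Module LinearMap

/-- The key induction (reflection functor argument): a semistable representation with
`0 < d₁ < d₀` forces `k·d₀ = (k+1)·d₁` for some `k > 0`. -/
lemma lemA_semistable : ∀ d₀ : ℕ, ∀ d₁ : ℕ, 0 < d₁ → d₁ < d₀ →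
    ∀ (V₁ V₀ : Type) [AddCommGroup V₁] [Module ℂ V₁] [FiniteDimensional ℂ V₁]
      [AddCommGroup V₀] [Module ℂ V₀] [FiniteDimensional ℂ V₀]
      (f : Fin 2 → V₁ →ₗ[ℂ] V₀),
      finrank ℂ V₁ = d₁ → finrank ℂ V₀ = d₀ → KroneckerSemistable f →
      ∃ k : ℕ, 0 < k ∧ k * d₀ = (k + 1) * d₁ := by
  intro d₀
  induction d₀ using Nat.strong_induction_on with
  | _ d₀ IH =>
    intro d₁ hd1 hlt V₁ V₀ _ _ _ _ _ _ f h1 h0 hs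
    -- Step 1: joint surjectivity, from semistability applied to (⊤, range f₀ ⊔ range f₁)
    set R : Submodule ℂ V₀ := LinearMap.range (f 0) ⊔ LinearMap.range (f 1) with hR
    have hsubR : KroneckerSubrep f ⊤ R := by
      intro i x _
      fin_cases i
      · exact Submodule.mem_sup_left (LinearMap.mem_range_self _ x)
      · exact Submodule.mem_sup_right (LinearMap.mem_range_self _ x)
    have hmR := hs ⊤ R hsubR
    rw [finrank_top, h1, h0] at hmR
    have hRd : finrank ℂ ↥R = d₀ := by
      have hle : finrank ℂ ↥R ≤ d₀ := h0 ▸ Submodule.finrank_le R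
      have h2 : (d₀ : ℤ) ≤ (finrank ℂ ↥R : ℤ) := by
        have hd1' : (0:ℤ) < (d₁:ℤ) := by exact_mod_cast hd1
        nlinarith
      have h3 : d₀ ≤ finrank ℂ ↥R := by exact_mod_cast h2
      omega
    have hRtop : R = ⊤ := Submodule.eq_top_of_finrank_eq (by rw [hRd, h0])
    -- the coprod map F
    set F : V₁ × V₁ →ₗ[ℂ] V₀ := (f 0).coprod (f 1) with hF
    have hFtop : LinearMap.range F = ⊤ := by
      rw [hF, LinearMap.range_coprod]; exact hRtop
    have hrn := LinearMap.finrank_range_add_finrank_ker F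
    rw [hFtop, finrank_top, h0, finrank_prod, h1] at hrn
    -- hrn : d₀ + finrank (ker F) = d₁ + d₁
    by_cases he0 : finrank ℂ ↥(LinearMap.ker F) = 0
    · exact ⟨1, one_pos, by omega⟩
    · have hepos : 0 < finrank ℂ ↥(LinearMap.ker F) := Nat.pos_of_ne_zero he0
      have heLt : finrank ℂ ↥(LinearMap.ker F) < d₁ := by omega
      -- the reflected representation
      set g : Fin 2 → (↥(LinearMap.ker F) →ₗ[ℂ] V₁) :=
        ![(LinearMap.fst ℂ V₁ V₁).comp (LinearMap.ker F).subtype,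
          (LinearMap.snd ℂ V₁ V₁).comp (LinearMap.ker F).subtype] with hg
      -- the reflected representation is semistable
      have hgs : KroneckerSemistable g := by
        intro U₁ U₀ hU
        have h1mem : ∀ u : ↥U₁, ((u : ↥(LinearMap.ker F)) : V₁ × V₁).1 ∈ U₀ := by
          intro u
          have := hU 0 u u.2
          simpa [hg] using this
        have h2mem : ∀ u : ↥U₁, ((u : ↥(LinearMap.ker F)) : V₁ × V₁).2 ∈ U₀ := by
          intro u
          have := hU 1 u u.2
          simpa [hg] using this
        -- the restricted coprod
        set F'' : ↥U₀ × ↥U₀ →ₗ[ℂ] V₀ :=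
          ((f 0).comp U₀.subtype).coprod ((f 1).comp U₀.subtype) with hF''
        set W₀ : Submodule ℂ V₀ := Submodule.map (f 0) U₀ ⊔ Submodule.map (f 1) U₀ with hW₀
        have hrange : LinearMap.range F'' = W₀ := by
          rw [hF'', LinearMap.range_coprod, LinearMap.range_comp, LinearMap.range_comp,
            Submodule.range_subtype, hW₀]
        -- (U₀, W₀) is a subrep of the original representation
        have hsub : KroneckerSubrep f U₀ W₀ := by
          intro i x hx
          fin_cases i
          · exact Submodule.mem_sup_left (Submodule.mem_map_of_mem hx)
          · exact Submodule.mem_sup_right (Submodule.mem_map_of_mem hx)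
        have hmain := hs U₀ W₀ hsub
        rw [h1, h0] at hmain
        -- injection of U₁ into ker F''
        set a : ↥U₁ →ₗ[ℂ] ↥U₀ × ↥U₀ :=
          (LinearMap.codRestrict U₀
              ((LinearMap.fst ℂ V₁ V₁).comp ((LinearMap.ker F).subtype.comp U₁.subtype))
              h1mem).prod
            (LinearMap.codRestrict U₀
              ((LinearMap.snd ℂ V₁ V₁).comp ((LinearMap.ker F).subtype.comp U₁.subtype))
              h2mem) with ha
        have haker : ∀ u, F'' (a u) = 0 := by
          intro u
          have hu : F ((u : ↥(LinearMap.ker F)) : V₁ × V₁) = 0 :=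
            (LinearMap.mem_ker.mp (u : ↥(LinearMap.ker F)).2)
          have hu' : f 0 ((u : ↥(LinearMap.ker F)) : V₁ × V₁).1
              + f 1 ((u : ↥(LinearMap.ker F)) : V₁ × V₁).2 = 0 := hu
          simp [ha, hF'']; exact hu'
        set b : ↥U₁ →ₗ[ℂ] ↥(LinearMap.ker F'') :=
          LinearMap.codRestrict _ a (fun u => LinearMap.mem_ker.mpr (haker u)) with hb
        have hbinj : Function.Injective b := by
          intro u v huv
          have hav : a u = a v := by
            have := congrArg (Subtype.val) huv
            simpa [hb] using this
          have h2 : ((u : ↥(LinearMap.ker F)) : V₁ × V₁)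
              = ((v : ↥(LinearMap.ker F)) : V₁ × V₁) := by
            refine Prod.ext ?_ ?_
            · exact congrArg (fun z => ((z.1 : ↥U₀) : V₁)) hav
            · exact congrArg (fun z => ((z.2 : ↥U₀) : V₁)) hav
          exact Subtype.ext (Subtype.ext h2)
        have hleU : finrank ℂ ↥U₁ ≤ finrank ℂ ↥(LinearMap.ker F'') :=
          LinearMap.finrank_le_finrank_of_injective hbinj
        have hrn2 := LinearMap.finrank_range_add_finrank_ker F''
        rw [finrank_prod, hrange] at hrn2
        -- hrn2 : finrank W₀ + finrank (ker F'') = finrank U₀ + finrank U₀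
        -- now pure arithmetic
        rw [h1]
        have hrn2' : (finrank ℂ ↥W₀ : ℤ) + (finrank ℂ ↥(LinearMap.ker F'') : ℤ)
            = (finrank ℂ ↥U₀ : ℤ) + (finrank ℂ ↥U₀ : ℤ) := by exact_mod_cast hrn2
        have hleU' : (finrank ℂ ↥U₁ : ℤ) ≤ (finrank ℂ ↥(LinearMap.ker F'') : ℤ) := by
          exact_mod_cast hleU
        have hE' : (d₀:ℤ) + (finrank ℂ ↥(LinearMap.ker F) : ℤ) = (d₁:ℤ) + (d₁:ℤ) := by
          exact_mod_cast hrn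
        have hd1nn : (0:ℤ) ≤ (d₁:ℤ) := by positivity
        have t1 : (d₁:ℤ) * (finrank ℂ ↥U₁ : ℤ) ≤ (d₁:ℤ) * (finrank ℂ ↥(LinearMap.ker F'') : ℤ) :=
          mul_le_mul_of_nonneg_left hleU' hd1nn
        have t2 : (d₁:ℤ) * (finrank ℂ ↥(LinearMap.ker F'') : ℤ)
            = (d₁:ℤ) * (finrank ℂ ↥U₀ : ℤ) + (d₁:ℤ) * (finrank ℂ ↥U₀ : ℤ)
              - (d₁:ℤ) * (finrank ℂ ↥W₀ : ℤ) := by linear_combination (d₁:ℤ) * hrn2'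
        have t3 : (finrank ℂ ↥(LinearMap.ker F) : ℤ) * (finrank ℂ ↥U₀ : ℤ)
            = (d₁:ℤ) * (finrank ℂ ↥U₀ : ℤ) + (d₁:ℤ) * (finrank ℂ ↥U₀ : ℤ)
              - (d₀:ℤ) * (finrank ℂ ↥U₀ : ℤ) := by
          linear_combination (finrank ℂ ↥U₀ : ℤ) * hE'
        linarith [hmain, t1, t2, t3]
      -- apply the induction hypothesis to the reflected representation
      obtain ⟨k, hk, hkeq⟩ :=
        IH d₁ hlt (finrank ℂ ↥(LinearMap.ker F)) hepos heLt (↥(LinearMap.ker F)) V₁ g rfl h1 hgs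
      refine ⟨k + 1, Nat.succ_pos _, ?_⟩
      have hkeq' : (k:ℤ) * d₁ = ((k:ℤ) + 1) * (finrank ℂ ↥(LinearMap.ker F) : ℤ) := by
        exact_mod_cast hkeq
      have hE' : (d₀:ℤ) + (finrank ℂ ↥(LinearMap.ker F) : ℤ) = (d₁:ℤ) + (d₁:ℤ) := by
        exact_mod_cast hrn
      have : ((k:ℤ) + 1) * d₀ = ((k:ℤ) + 2) * d₁ := by linear_combination ((k:ℤ)+1) * hE' + hkeq'
      exact_mod_cast this

/-- Duality: the dual representation of a semistable representation is semistable. -/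
lemma dual_semistable {V₁ V₀ : Type} [AddCommGroup V₁] [Module ℂ V₁] [FiniteDimensional ℂ V₁]
    [AddCommGroup V₀] [Module ℂ V₀] [FiniteDimensional ℂ V₀]
    (f : Fin 2 → V₁ →ₗ[ℂ] V₀) (hs : KroneckerSemistable f) :
    KroneckerSemistable (fun i => (f i).dualMap) := by
  intro W₁ W₀ hW
  have hsub : KroneckerSubrep f W₀.dualCoannihilator W₁.dualCoannihilator := by
    intro i x hx
    rw [Submodule.mem_dualCoannihilator]
    intro φ hφ
    have h1 : (f i).dualMap φ ∈ W₀ := hW i φ hφ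
    exact (Submodule.mem_dualCoannihilator x).mp hx _ h1
  have hmain := hs W₀.dualCoannihilator W₁.dualCoannihilator hsub
  have e1 : finrank ℂ ↥W₁ + finrank ℂ ↥W₁.dualCoannihilator = finrank ℂ V₀ :=
    Subspace.finrank_add_finrank_dualCoannihilator_eq W₁
  have e0 : finrank ℂ ↥W₀ + finrank ℂ ↥W₀.dualCoannihilator = finrank ℂ V₁ :=
    Subspace.finrank_add_finrank_dualCoannihilator_eq W₀
  rw [show finrank ℂ (Module.Dual ℂ V₀) = finrank ℂ V₀ from Subspace.dual_finrank_eq,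
    show finrank ℂ (Module.Dual ℂ V₁) = finrank ℂ V₁ from Subspace.dual_finrank_eq]
  have e1' : (finrank ℂ ↥W₁ : ℤ) + (finrank ℂ ↥W₁.dualCoannihilator : ℤ)
      = (finrank ℂ V₀ : ℤ) := by exact_mod_cast e1
  have e0' : (finrank ℂ ↥W₀ : ℤ) + (finrank ℂ ↥W₀.dualCoannihilator : ℤ)
      = (finrank ℂ V₁ : ℤ) := by exact_mod_cast e0
  have t1 : (finrank ℂ V₁ : ℤ) * (finrank ℂ ↥W₁ : ℤ)
      = (finrank ℂ V₁ : ℤ) * (finrank ℂ V₀ : ℤ)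
        - (finrank ℂ V₁ : ℤ) * (finrank ℂ ↥W₁.dualCoannihilator : ℤ) := by
    linear_combination (finrank ℂ V₁ : ℤ) * e1'
  have t2 : (finrank ℂ V₀ : ℤ) * (finrank ℂ ↥W₀ : ℤ)
      = (finrank ℂ V₀ : ℤ) * (finrank ℂ V₁ : ℤ)
        - (finrank ℂ V₀ : ℤ) * (finrank ℂ ↥W₀.dualCoannihilator : ℤ) := by
    linear_combination (finrank ℂ V₀ : ℤ) * e0'
  linarith [hmain, t1, t2]

/-- If there exists a semistable representation of `K₂` of dimension
vector `(d₋₁, d₀)` with `d₋₁, d₀ > 0`, then either `d₋₁ = d₀`, or `k·d₀ = (k+1)·d₋₁`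
for some positive integer `k`, or `k·d₋₁ = (k+1)·d₀` for some positive integer `k`. -/
theorem semistable_dims_on_lines (d₁ d₀ : ℕ) (hd1 : 0 < d₁) (hd0 : 0 < d₀)
    (V₁ V₀ : Type) [AddCommGroup V₁] [Module ℂ V₁] [FiniteDimensional ℂ V₁]
    [AddCommGroup V₀] [Module ℂ V₀] [FiniteDimensional ℂ V₀]
    (f : Fin 2 → V₁ →ₗ[ℂ] V₀)
    (h1 : Module.finrank ℂ V₁ = d₁) (h0 : Module.finrank ℂ V₀ = d₀)
    (hs : KroneckerSemistable f) :
    d₁ = d₀ ∨ (∃ k : ℕ, 0 < k ∧ k * d₀ = (k + 1) * d₁) ∨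
      (∃ k : ℕ, 0 < k ∧ k * d₁ = (k + 1) * d₀) := by
  rcases lt_trichotomy d₁ d₀ with hlt | heq | hgt
  · exact Or.inr (Or.inl (lemA_semistable d₀ d₁ hd1 hlt V₁ V₀ f h1 h0 hs))
  · exact Or.inl heq
  · refine Or.inr (Or.inr ?_)
    have hdual := dual_semistable f hs
    exact lemA_semistable d₁ d₀ hd0 hgt (Module.Dual ℂ V₀) (Module.Dual ℂ V₁)
      (fun i => (f i).dualMap)
      (by rw [Subspace.dual_finrank_eq, h0]) (by rw [Subspace.dual_finrank_eq, h1]) hdual
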